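/- arXiv:2111.00039 — 4 statements merged into one kernel-verified Lean document; each statement's English description precedes it below -/
import Mathlib

section
/- Let 𝒜 be a subspace of linear maps from Fⁿ to Fⁿ and let c be the maximum over all subspaces U ⊆ Fⁿ of dim U − dim 𝒜(U). If U₁ and U₂ both attain this maximum, then U₁ ∩ U₂ and U₁ + U₂ also attain this maximum. -/
open Module

/-- The image subspace `𝒜(U)`: the span of all `A u` with `A ∈ 𝒜`, `u ∈ U`. -/
def mapSpan {F V W : Type*} [Field F] [AddCommGroup V] [Module F V]
    [AddCommGroup W] [Module F W]
    (𝒜 : Submodule F (V →ₗ[F] W)) (U : Submodule F V) : Submodule F W :=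
  Submodule.span F {w | ∃ A ∈ 𝒜, ∃ u ∈ U, A u = w}

lemma mapSpan_mono {F V W : Type*} [Field F] [AddCommGroup V] [Module F V]
    [AddCommGroup W] [Module F W]
    (𝒜 : Submodule F (V →ₗ[F] W)) {U U' : Submodule F V} (h : U ≤ U') :
    mapSpan 𝒜 U ≤ mapSpan 𝒜 U' := by
  apply Submodule.span_mono
  rintro w ⟨A, hA, u, hu, rfl⟩
  exact ⟨A, hA, u, h hu, rfl⟩

lemma mapSpan_sup {F V W : Type*} [Field F] [AddCommGroup V] [Module F V]
    [AddCommGroup W] [Module F W]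
    (𝒜 : Submodule F (V →ₗ[F] W)) (U₁ U₂ : Submodule F V) :
    mapSpan 𝒜 (U₁ ⊔ U₂) = mapSpan 𝒜 U₁ ⊔ mapSpan 𝒜 U₂ := by
  apply le_antisymm
  · apply Submodule.span_le.2
    rintro w ⟨A, hA, u, hu, rfl⟩
    rcases Submodule.mem_sup.1 hu with ⟨x, hx, y, hy, rfl⟩
    rw [map_add]
    exact Submodule.add_mem_sup (Submodule.subset_span ⟨A, hA, x, hx, rfl⟩)
      (Submodule.subset_span ⟨A, hA, y, hy, rfl⟩)
  · exact sup_le (mapSpan_mono 𝒜 le_sup_left) (mapSpan_mono 𝒜 le_sup_right)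

theorem inf_sup_of_max_shrunk {F : Type*} [Field F] {n : ℕ}
    (𝒜 : Submodule F ((Fin n → F) →ₗ[F] (Fin n → F))) (c : ℤ)
    (hmax : ∀ U : Submodule F (Fin n → F),
      (finrank F U : ℤ) - finrank F (mapSpan 𝒜 U) ≤ c)
    (U₁ U₂ : Submodule F (Fin n → F))
    (h₁ : (finrank F U₁ : ℤ) - finrank F (mapSpan 𝒜 U₁) = c)
    (h₂ : (finrank F U₂ : ℤ) - finrank F (mapSpan 𝒜 U₂) = c) :
    (finrank F ↥(U₁ ⊓ U₂) : ℤ) - finrank F (mapSpan 𝒜 (U₁ ⊓ U₂)) = c ∧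
    (finrank F ↥(U₁ ⊔ U₂) : ℤ) - finrank F (mapSpan 𝒜 (U₁ ⊔ U₂)) = c := by
  have hU : finrank F ↥(U₁ ⊔ U₂) + finrank F ↥(U₁ ⊓ U₂)
      = finrank F U₁ + finrank F U₂ := Submodule.finrank_sup_add_finrank_inf_eq U₁ U₂
  have hMsup : mapSpan 𝒜 (U₁ ⊔ U₂) = mapSpan 𝒜 U₁ ⊔ mapSpan 𝒜 U₂ := mapSpan_sup 𝒜 U₁ U₂
  have hMinf : mapSpan 𝒜 (U₁ ⊓ U₂) ≤ mapSpan 𝒜 U₁ ⊓ mapSpan 𝒜 U₂ :=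
    le_inf (mapSpan_mono 𝒜 inf_le_left) (mapSpan_mono 𝒜 inf_le_right)
  have hMU : finrank F ↥(mapSpan 𝒜 U₁ ⊔ mapSpan 𝒜 U₂) + finrank F ↥(mapSpan 𝒜 U₁ ⊓ mapSpan 𝒜 U₂)
      = finrank F (mapSpan 𝒜 U₁) + finrank F (mapSpan 𝒜 U₂) :=
    Submodule.finrank_sup_add_finrank_inf_eq _ _
  have hinf_le : finrank F (mapSpan 𝒜 (U₁ ⊓ U₂)) ≤ finrank F ↥(mapSpan 𝒜 U₁ ⊓ mapSpan 𝒜 U₂) :=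
    Submodule.finrank_mono hMinf
  have hA := hmax (U₁ ⊓ U₂)
  have hB := hmax (U₁ ⊔ U₂)
  rw [hMsup] at hB
  refine ⟨by omega, ?_⟩
  rw [hMsup]
  omega
end

section
/- Let 𝒜 be a subspace of linear maps Fⁿ → Fⁿ, c maximal with a c-shrunk subspace existing, and let U be the minimal c-shrunk subspace. Then for every invertible linear map T: Fⁿ → Fⁿ such that A ∘ T ∈ 𝒜 for all A ∈ 𝒜, we have T(U) = U. -/
open Module

/-- `U` is a `c`-shrunk subspace of `𝒜`. -/
def IsShrunk {F V : Type*} [Field F] [AddCommGroup V] [Module F V]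
    (𝒜 : Submodule F (V →ₗ[F] V)) (c : ℤ) (U : Submodule F V) : Prop :=
  (finrank F U : ℤ) - finrank F (mapSpan 𝒜 U) = c

theorem minimal_shrunk_fixed_by_automorphism {F : Type*} [Field F] {n : ℕ}
    (𝒜 : Submodule F ((Fin n → F) →ₗ[F] (Fin n → F))) (c : ℤ)
    (hmax : IsGreatest {d : ℤ | ∃ U : Submodule F (Fin n → F),
      (finrank F U : ℤ) - finrank F (mapSpan 𝒜 U) = d} c)
    (U : Submodule F (Fin n → F))
    (hU : IsShrunk 𝒜 c U)
    (hUmin : ∀ U' : Submodule F (Fin n → F), IsShrunk 𝒜 c U' → U ≤ U')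
    (T : (Fin n → F) ≃ₗ[F] (Fin n → F))
    (hT : ∀ A ∈ 𝒜, A ∘ₗ (T : (Fin n → F) →ₗ[F] (Fin n → F)) ∈ 𝒜) :
    Submodule.map (T : (Fin n → F) →ₗ[F] (Fin n → F)) U = U := by
  -- The composition map A ↦ A ∘ T as an endomorphism of 𝒜
  let f : 𝒜 →ₗ[F] 𝒜 :=
    { toFun := fun A => ⟨A.1 ∘ₗ (T : (Fin n → F) →ₗ[F] (Fin n → F)), hT A.1 A.2⟩
      map_add' := by intro a b; ext x; simp
      map_smul' := by intro r a; ext x; simp }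
  have hfinj : Function.Injective f := by
    intro A B hAB
    have h1 : A.1 ∘ₗ (T : (Fin n → F) →ₗ[F] (Fin n → F))
        = B.1 ∘ₗ (T : (Fin n → F) →ₗ[F] (Fin n → F)) := congrArg Subtype.val hAB
    apply Subtype.ext
    apply LinearMap.ext; intro x
    have := LinearMap.congr_fun h1 (T.symm x)
    simpa using this
  have hfsurj : Function.Surjective f := by
    have := LinearMap.injective_iff_surjective (K := F) (V := 𝒜) (f := f)
    exact this.mp hfinj
  -- hence 𝒜 ∘ T⁻¹ ⊆ 𝒜
  have hT' : ∀ B ∈ 𝒜, B ∘ₗ (T.symm : (Fin n → F) →ₗ[F] (Fin n → F)) ∈ 𝒜 := by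
    intro B hB
    obtain ⟨A, hA⟩ := hfsurj ⟨B, hB⟩
    have hA' : A.1 ∘ₗ (T : (Fin n → F) →ₗ[F] (Fin n → F)) = B :=
      congrArg Subtype.val hA
    have : B ∘ₗ (T.symm : (Fin n → F) →ₗ[F] (Fin n → F)) = A.1 := by
      apply LinearMap.ext; intro x
      have := LinearMap.congr_fun hA' (T.symm x)
      simpa using this.symm
    rw [this]; exact A.2
  -- T⁻¹(U) has the same 𝒜-image as U
  set U' : Submodule F (Fin n → F) :=
    Submodule.map (T.symm : (Fin n → F) →ₗ[F] (Fin n → F)) U with hU'def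
  have hms : mapSpan 𝒜 U' = mapSpan 𝒜 U := by
    apply le_antisymm
    · apply Submodule.span_le.mpr
      rintro w ⟨A, hA, u, hu, rfl⟩
      obtain ⟨v, hv, rfl⟩ := hu
      exact Submodule.subset_span ⟨A ∘ₗ (T.symm : (Fin n → F) →ₗ[F] (Fin n → F)),
        hT' A hA, v, hv, rfl⟩
    · apply Submodule.span_le.mpr
      rintro w ⟨A, hA, u, hu, rfl⟩
      refine Submodule.subset_span ⟨A ∘ₗ (T : (Fin n → F) →ₗ[F] (Fin n → F)),
        hT A hA, T.symm u, ⟨u, hu, rfl⟩, ?_⟩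
      simp
  have hfr : finrank F U' = finrank F U := LinearEquiv.finrank_map_eq T.symm U
  have hshrunk : IsShrunk 𝒜 c U' := by
    unfold IsShrunk at hU ⊢
    rw [hms, hfr]; exact hU
  have hle : U ≤ U' := hUmin U' hshrunk
  -- so T(U) ≤ U
  have hle' : Submodule.map (T : (Fin n → F) →ₗ[F] (Fin n → F)) U ≤ U := by
    rintro x ⟨u, hu, rfl⟩
    obtain ⟨v, hv, hvu⟩ := hle hu
    have : T u = v := by
      have : T (T.symm v) = T u := congrArg T hvu
      simpa using this.symm
    simpa [this] using hv
  exact Submodule.eq_of_le_of_finrank_le hle'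
    (le_of_eq (LinearEquiv.finrank_map_eq T U).symm)
end

section
/- Let Q be a quiver with finitely many vertices and arrows, W a finite-dimensional representation of Q over a field F, and σ : Q₀ → ℤ a weight. Let c be the maximum of σ(dim W') over all subrepresentations W' of W. If W₁ and W₂ are subrepresentations attaining this maximum, then so are W₁ ∩ W₂ and W₁ + W₂. -/
open Module

variable {F : Type*} [Field F] {ι κ : Type*}

/-- A family of subspaces is a subrepresentation of the representation given by
the vertex spaces `Wsp` and the arrow maps `Wmap` (arrows indexed by `κ`, with
tail `t a` and head `h a`). -/
def IsSubrep {ι κ : Type*} {F : Type*} [Field F] {Wsp : ι → Type*}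
    [∀ i, AddCommGroup (Wsp i)] [∀ i, Module F (Wsp i)]
    (t h : κ → ι) (Wmap : ∀ a : κ, Wsp (t a) →ₗ[F] Wsp (h a))
    (W' : ∀ i, Submodule F (Wsp i)) : Prop :=
  ∀ a : κ, (W' (t a)).map (Wmap a) ≤ W' (h a)

/-- `σ(dim W') = Σ_x σ(x)·dim W'(x)`. -/
noncomputable def sigmaDim {ι : Type*} [Fintype ι] {F : Type*} [Field F] {Wsp : ι → Type*}
    [∀ i, AddCommGroup (Wsp i)] [∀ i, Module F (Wsp i)]
    (σ : ι → ℤ) (W' : ∀ i, Submodule F (Wsp i)) : ℤ :=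
  ∑ i, σ i * (finrank F (W' i) : ℤ)

theorem optimal_witness_inf_sup [Fintype ι] [Fintype κ]
    {Wsp : ι → Type*} [∀ i, AddCommGroup (Wsp i)] [∀ i, Module F (Wsp i)]
    [∀ i, FiniteDimensional F (Wsp i)]
    (t h : κ → ι) (Wmap : ∀ a : κ, Wsp (t a) →ₗ[F] Wsp (h a))
    (σ : ι → ℤ) (c : ℤ)
    (hmax : ∀ W' : ∀ i, Submodule F (Wsp i), IsSubrep t h Wmap W' →
      sigmaDim σ W' ≤ c)
    (W₁ W₂ : ∀ i, Submodule F (Wsp i))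
    (h₁ : IsSubrep t h Wmap W₁) (h₂ : IsSubrep t h Wmap W₂)
    (hc₁ : sigmaDim σ W₁ = c) (hc₂ : sigmaDim σ W₂ = c) :
    (IsSubrep t h Wmap (fun i => W₁ i ⊓ W₂ i) ∧
      sigmaDim σ (fun i => W₁ i ⊓ W₂ i) = c) ∧
    (IsSubrep t h Wmap (fun i => W₁ i ⊔ W₂ i) ∧
      sigmaDim σ (fun i => W₁ i ⊔ W₂ i) = c) := by
  have hinf : IsSubrep t h Wmap (fun i => W₁ i ⊓ W₂ i) := by
    intro a x hx
    rcases Submodule.mem_map.1 hx with ⟨y, hy, rfl⟩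
    exact ⟨h₁ a (Submodule.mem_map_of_mem hy.1), h₂ a (Submodule.mem_map_of_mem hy.2)⟩
  have hsup : IsSubrep t h Wmap (fun i => W₁ i ⊔ W₂ i) := by
    intro a
    rw [Submodule.map_sup]
    exact sup_le_sup (h₁ a) (h₂ a)
  have hsum : sigmaDim σ (fun i => W₁ i ⊓ W₂ i) + sigmaDim σ (fun i => W₁ i ⊔ W₂ i)
      = sigmaDim σ W₁ + sigmaDim σ W₂ := by
    unfold sigmaDim
    rw [← Finset.sum_add_distrib, ← Finset.sum_add_distrib]
    refine Finset.sum_congr rfl fun i _ => ?_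
    rw [← mul_add, ← mul_add]
    congr 1
    have := Submodule.finrank_sup_add_finrank_inf_eq (W₁ i) (W₂ i)
    push_cast
    omega
  have le1 := hmax _ hinf
  have le2 := hmax _ hsup
  exact ⟨⟨hinf, by omega⟩, ⟨hsup, by omega⟩⟩
end

section
/- Let 𝒜 ⊆ Hom(Fⁿ, Fⁿ) be a matrix space and let c* = max{dim U − dim 𝒜(U) : U ⊆ Fⁿ subspace}. Then for every d ≥ 1 and every B ∈ 𝒜^{d} = M_d(F) ⊗ 𝒜, rk(B) ≤ (n − c*)·d; equivalently, rk(𝒜^{d})/d ≤ n − c* for all d. -/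
open Module TensorProduct

set_option maxHeartbeats 2000000
set_option synthInstance.maxHeartbeats 1000000

/-- The `d`-th tensor blow-up `𝒜^{d}`, acting on `V ⊗ F^d`: the span of the maps
`A ⊗ X` with `A ∈ 𝒜` and `X ∈ M_d(F)`. -/
noncomputable def tensorBlowUp {F V : Type*} [Field F] [AddCommGroup V] [Module F V]
    (𝒜 : Submodule F (V →ₗ[F] V)) (d : ℕ) :
    Submodule F ((V ⊗[F] (Fin d → F)) →ₗ[F] (V ⊗[F] (Fin d → F))) :=
  Submodule.span F {B | ∃ A ∈ 𝒜, ∃ X : (Fin d → F) →ₗ[F] (Fin d → F),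
    TensorProduct.map A X = B}

private lemma rank_rTensor_range {F : Type*} [Field F] {n : ℕ} (d : ℕ)
    (M : Submodule F (Fin n → F)) :
    finrank F (LinearMap.range (LinearMap.rTensor (Fin d → F) M.subtype))
      = finrank F M * d := by
  rw [LinearMap.finrank_range_of_inj
    (Module.Flat.rTensor_preserves_injective_linearMap _ M.injective_subtype)]
  simp [Module.finrank_tensorProduct]

private lemma blowUp_mapsInto {F : Type*} [Field F] {n : ℕ}
    (𝒜 : Submodule F ((Fin n → F) →ₗ[F] (Fin n → F))) (U : Submodule F (Fin n → F)) (d : ℕ) :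
    tensorBlowUp 𝒜 d ≤
      Submodule.compatibleMaps
        (LinearMap.range (LinearMap.rTensor (Fin d → F) U.subtype))
        (LinearMap.range (LinearMap.rTensor (Fin d → F) (mapSpan 𝒜 U).subtype)) := by
  rw [tensorBlowUp, Submodule.span_le]
  rintro _ ⟨A, hA, X, rfl⟩
  rintro _ ⟨t, rfl⟩
  have key : (TensorProduct.map A X).comp (LinearMap.rTensor (Fin d → F) U.subtype)
      = (LinearMap.rTensor (Fin d → F) (mapSpan 𝒜 U).subtype).comp
        (TensorProduct.map (A.restrict (p := U) (q := mapSpan 𝒜 U)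
          (fun u hu => Submodule.subset_span ⟨A, hA, u, hu, rfl⟩)) X) := by
    rw [LinearMap.map_comp_rTensor, LinearMap.rTensor, ← TensorProduct.map_comp]
    rfl
  rw [Submodule.mem_comap]
  have h := congrArg (fun f => f t) key
  simp only [LinearMap.comp_apply] at h
  rw [h]
  exact LinearMap.mem_range_self _ _

theorem blowUp_rank_le_of_max_shrunk {F : Type*} [Field F] {n : ℕ}
    (𝒜 : Submodule F ((Fin n → F) →ₗ[F] (Fin n → F))) (cstar : ℤ)
    (hc : IsGreatest {d : ℤ | ∃ U : Submodule F (Fin n → F),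
      d = (finrank F U : ℤ) - finrank F (mapSpan 𝒜 U)} cstar) :
    ∀ d : ℕ, 1 ≤ d → ∀ B ∈ tensorBlowUp 𝒜 d,
      (finrank F (LinearMap.range B) : ℤ) ≤ ((n : ℤ) - cstar) * d := by
  intro d _ B hB
  obtain ⟨U, hU⟩ := hc.1
  obtain ⟨C, hC⟩ :=
    (LinearMap.range (LinearMap.rTensor (Fin d → F) U.subtype)).exists_isCompl
  have hW₁rank := rank_rTensor_range (F := F) d U
  have hW₂rank := rank_rTensor_range (F := F) d (mapSpan 𝒜 U)
  have hBW : Submodule.map B (LinearMap.range (LinearMap.rTensor (Fin d → F) U.subtype))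
      ≤ LinearMap.range (LinearMap.rTensor (Fin d → F) (mapSpan 𝒜 U).subtype) :=
    Submodule.map_le_iff_le_comap.mpr (blowUp_mapsInto 𝒜 U d hB)
  have hrankC : finrank F U * d + finrank F C = n * d := by
    rw [← hW₁rank, Submodule.finrank_add_eq_of_isCompl hC]
    simp [Module.finrank_tensorProduct]
  have hrange : LinearMap.range B
      = Submodule.map B (LinearMap.range (LinearMap.rTensor (Fin d → F) U.subtype))
        ⊔ Submodule.map B C := by
    rw [← Submodule.map_sup, hC.sup_eq_top, Submodule.map_top]
  have hkey : finrank F (LinearMap.range B)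
      ≤ finrank F (mapSpan 𝒜 U) * d + finrank F C := by
    rw [hrange]
    refine le_trans (Submodule.finrank_add_le_finrank_add_finrank _ _) ?_
    rw [← hW₂rank]
    exact Nat.add_le_add (Submodule.finrank_mono hBW) (Submodule.finrank_map_le _ _)
  have hcast : (finrank F (LinearMap.range B) : ℤ)
      ≤ (finrank F (mapSpan 𝒜 U) : ℤ) * d + (finrank F C : ℤ) := by exact_mod_cast hkey
  have hC' : (finrank F U : ℤ) * d + (finrank F C : ℤ) = (n : ℤ) * d := by
    exact_mod_cast hrankC
  rw [hU]
  have : ((n : ℤ) - ((finrank F U : ℤ) - (finrank F (mapSpan 𝒜 U) : ℤ))) * d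
      = (finrank F (mapSpan 𝒜 U) : ℤ) * d + ((n : ℤ) * d - (finrank F U : ℤ) * d) := by ring
  rw [this]
  linarith
end
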